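/- Let S₁ and S₂ be measurable spaces, let ν be a sigma-finite measure on S₁, and let f, g : S₁ → ℝ be nonnegative measurable functions. Let M : Kernel S₁ S₂ be an s-finite kernel, let k, ℓ : S₁ × S₂ → ℝ be nonnegative measurable functions, and let K, L : Kernel S₁ S₂ be Markov kernels such that for all t ∈ S₁, K t = (M t).withDensity (fun x => ENNReal.ofReal (k (t,x))) and L t = (M t).withDensity (fun x => ENNReal.ofReal (ℓ (t,x))). Then for every α ∈ (0,1), ∫⁻ p, ENNReal.ofReal((α·(f p.1 · k p) + (1−α)·(g p.1 · ℓ p) − (f p.1 · k p)^α · (g p.1 · ℓ p)^{1−α})/(1−α)) ∂(ν.compProd M) = ∫⁻ t, ENNReal.ofReal((α·f t + (1−α)·g t − (f t)^α·(g t)^{1−α})/(1−α)) ∂ν + ∫⁻ t, ENNReal.ofReal((f t)^α · (g t)^{1−α}) · ( ∫⁻ x, ENNReal.ofReal((α·k (t,x) + (1−α)·ℓ (t,x) − (k (t,x))^α·(ℓ (t,x))^{1−α})/(1−α)) ∂(M t) ) ∂ν. That is, T_α(λ ⊗ K ‖ μ ⊗ L) = T_α(λ‖μ) + ∫ T_α(K_t‖L_t)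 · f_t^α g_t^{1−α} dν(t), where λ = ν.withDensity (ENNReal.ofReal ∘ f) and μ = ν.withDensity (ENNReal.ofReal ∘ g). -/

import Mathlib

open MeasureTheory ProbabilityTheory
open scoped ENNReal

private lemma tsallis_step {S₂ : Type*} [MeasurableSpace S₂] (μ : Measure S₂)
    (k ℓ : S₂ → ℝ) (hk : Measurable k) (hℓ : Measurable ℓ)
    (hk0 : ∀ x, 0 ≤ k x) (hℓ0 : ∀ x, 0 ≤ ℓ x)
    (hkint : ∫⁻ x, ENNReal.ofReal (k x) ∂μ = 1)
    (hℓint : ∫⁻ x, ENNReal.ofReal (ℓ x) ∂μ = 1)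
    (a b : ℝ) (ha : 0 ≤ a) (hb : 0 ≤ b)
    (α : ℝ) (hα : α ∈ Set.Ioo (0 : ℝ) 1) :
    (∫⁻ x, ENNReal.ofReal ((α * (a * k x) + (1 - α) * (b * ℓ x)
        - (a * k x) ^ α * (b * ℓ x) ^ (1 - α)) / (1 - α)) ∂μ)
      + (∫⁻ x, ENNReal.ofReal (a ^ α * b ^ (1 - α) * ((k x) ^ α * (ℓ x) ^ (1 - α)) / (1 - α)) ∂μ)
    = ENNReal.ofReal (α * a / (1 - α)) + ENNReal.ofReal b := by
  obtain ⟨hα0, hα1⟩ := hα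
  have hc : (0:ℝ) < 1 - α := by linarith
  have hamgm : ∀ p q : ℝ, 0 ≤ p → 0 ≤ q → p ^ α * q ^ (1 - α) ≤ α * p + (1 - α) * q :=
    fun p q hp hq =>
      Real.geom_mean_le_arith_mean2_weighted hα0.le hc.le hp hq (by ring)
  have mN : Measurable fun x => ENNReal.ofReal ((α * (a * k x) + (1 - α) * (b * ℓ x)
      - (a * k x) ^ α * (b * ℓ x) ^ (1 - α)) / (1 - α)) := by
    apply Measurable.ennreal_ofReal
    exact (((measurable_const.mul (measurable_const.mul hk)).add
      (measurable_const.mul (measurable_const.mul hℓ))).sub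
      (((measurable_const.mul hk).pow measurable_const).mul
        ((measurable_const.mul hℓ).pow measurable_const))).div_const _
  have key : ∀ x, ENNReal.ofReal ((α * (a * k x) + (1 - α) * (b * ℓ x)
        - (a * k x) ^ α * (b * ℓ x) ^ (1 - α)) / (1 - α))
      + ENNReal.ofReal (a ^ α * b ^ (1 - α) * ((k x) ^ α * (ℓ x) ^ (1 - α)) / (1 - α))
      = ENNReal.ofReal (α * a / (1 - α)) * ENNReal.ofReal (k x)
        + ENNReal.ofReal b * ENNReal.ofReal (ℓ x) := by
    intro x
    have h1 : 0 ≤ (α * (a * k x) + (1 - α) * (b * ℓ x)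
        - (a * k x) ^ α * (b * ℓ x) ^ (1 - α)) / (1 - α) :=
      div_nonneg (sub_nonneg.2 (hamgm _ _ (mul_nonneg ha (hk0 x)) (mul_nonneg hb (hℓ0 x)))) hc.le
    have h2 : 0 ≤ a ^ α * b ^ (1 - α) * ((k x) ^ α * (ℓ x) ^ (1 - α)) / (1 - α) :=
      div_nonneg (mul_nonneg (mul_nonneg (Real.rpow_nonneg ha _) (Real.rpow_nonneg hb _))
        (mul_nonneg (Real.rpow_nonneg (hk0 x) _) (Real.rpow_nonneg (hℓ0 x) _))) hc.le
    rw [← ENNReal.ofReal_add h1 h2,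
      ← ENNReal.ofReal_mul (show (0:ℝ) ≤ α * a / (1 - α) by positivity),
      ← ENNReal.ofReal_mul hb,
      ← ENNReal.ofReal_add (mul_nonneg (by positivity) (hk0 x)) (mul_nonneg hb (hℓ0 x))]
    congr 1
    rw [Real.mul_rpow ha (hk0 x), Real.mul_rpow hb (hℓ0 x)]
    field_simp
    ring
  rw [← lintegral_add_left mN, lintegral_congr key,
    lintegral_add_left (hk.ennreal_ofReal.const_mul _),
    lintegral_const_mul _ hk.ennreal_ofReal, lintegral_const_mul _ hℓ.ennreal_ofReal,
    hkint, hℓint, mul_one, mul_one]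

private lemma tsallis_inner {S₂ : Type*} [MeasurableSpace S₂] (μ : Measure S₂)
    (k ℓ : S₂ → ℝ) (hk : Measurable k) (hℓ : Measurable ℓ)
    (hk0 : ∀ x, 0 ≤ k x) (hℓ0 : ∀ x, 0 ≤ ℓ x)
    (hkint : ∫⁻ x, ENNReal.ofReal (k x) ∂μ = 1)
    (hℓint : ∫⁻ x, ENNReal.ofReal (ℓ x) ∂μ = 1)
    (a b : ℝ) (ha : 0 ≤ a) (hb : 0 ≤ b)
    (α : ℝ) (hα : α ∈ Set.Ioo (0 : ℝ) 1) :
    ∫⁻ x, ENNReal.ofReal ((α * (a * k x) + (1 - α) * (b * ℓ x)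
        - (a * k x) ^ α * (b * ℓ x) ^ (1 - α)) / (1 - α)) ∂μ
    = ENNReal.ofReal ((α * a + (1 - α) * b - a ^ α * b ^ (1 - α)) / (1 - α))
      + ENNReal.ofReal (a ^ α * b ^ (1 - α)) *
        ∫⁻ x, ENNReal.ofReal ((α * k x + (1 - α) * ℓ x
          - (k x) ^ α * (ℓ x) ^ (1 - α)) / (1 - α)) ∂μ := by
  obtain ⟨hα0, hα1⟩ := hα
  have hc : (0:ℝ) < 1 - α := by linarith
  have hamgm : ∀ p q : ℝ, 0 ≤ p → 0 ≤ q → p ^ α * q ^ (1 - α) ≤ α * p + (1 - α) * q :=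
    fun p q hp hq =>
      Real.geom_mean_le_arith_mean2_weighted hα0.le hc.le hp hq (by ring)
  -- step with a, b
  have hAB := tsallis_step μ k ℓ hk hℓ hk0 hℓ0 hkint hℓint a b ha hb α ⟨hα0, hα1⟩
  -- step with 1, 1
  have h11 := tsallis_step μ k ℓ hk hℓ hk0 hℓ0 hkint hℓint 1 1 zero_le_one zero_le_one α ⟨hα0, hα1⟩
  simp only [one_mul, mul_one, Real.one_rpow, ENNReal.ofReal_one] at h11
  set R : ℝ≥0∞ := ∫⁻ x, ENNReal.ofReal ((k x) ^ α * (ℓ x) ^ (1 - α) / (1 - α)) ∂μ with hR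
  set B : ℝ≥0∞ := ∫⁻ x, ENNReal.ofReal ((α * k x + (1 - α) * ℓ x
      - (k x) ^ α * (ℓ x) ^ (1 - α)) / (1 - α)) ∂μ with hB
  have h11' : B + R = ENNReal.ofReal (α / (1 - α)) + 1 := by
    simpa [hR, hB] using h11
  have hRfin : R ≠ ⊤ := by
    refine ne_top_of_le_ne_top (by simp) (le_trans le_add_self h11'.le)
  have hGr0 : 0 ≤ a ^ α * b ^ (1 - α) := mul_nonneg (Real.rpow_nonneg ha _) (Real.rpow_nonneg hb _)
  have hQ : (∫⁻ x, ENNReal.ofReal (a ^ α * b ^ (1 - α) * ((k x) ^ α * (ℓ x) ^ (1 - α)) / (1 - α)) ∂μ)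
      = ENNReal.ofReal (a ^ α * b ^ (1 - α)) * R := by
    rw [hR, ← lintegral_const_mul' _ _ ENNReal.ofReal_ne_top]
    refine lintegral_congr fun x => ?_
    rw [← ENNReal.ofReal_mul hGr0, mul_div_assoc]
  have hfin : ENNReal.ofReal (a ^ α * b ^ (1 - α)) * R ≠ ⊤ :=
    ENNReal.mul_ne_top ENNReal.ofReal_ne_top hRfin
  refine (ENNReal.add_left_inj hfin).1 ?_
  rw [← hQ] at hfin ⊢
  rw [hAB, hQ]
  have hA0 : 0 ≤ (α * a + (1 - α) * b - a ^ α * b ^ (1 - α)) / (1 - α) :=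
    div_nonneg (sub_nonneg.2 (hamgm a b ha hb)) hc.le
  rw [add_assoc, ← mul_add, h11', mul_add, mul_one, ← ENNReal.ofReal_mul hGr0,
    ← ENNReal.ofReal_add (by positivity) hGr0, ← ENNReal.ofReal_add hA0 (by positivity)]
  rw [← ENNReal.ofReal_add (by positivity) hb]
  congr 1
  field_simp
  ring

/-- Disintegration of Tsallis divergences: for `α ∈ (0,1)`,
`T_α(λ ⊗ K ‖ μ ⊗ L) = T_α(λ‖μ) + ∫ T_α(K_t‖L_t) · f_t^α g_t^{1-α} dν(t)`,
where `λ = ν.withDensity f`, `μ = ν.withDensity g`, and the Markov kernels `K, L` have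
densities `k, ℓ` with respect to the kernel `M`. -/
theorem tsallis_kernel_disintegration {S₁ S₂ : Type*} [MeasurableSpace S₁] [MeasurableSpace S₂]
    (ν : Measure S₁) [SigmaFinite ν]
    (f g : S₁ → ℝ) (hf : Measurable f) (hg : Measurable g)
    (hf0 : ∀ t, 0 ≤ f t) (hg0 : ∀ t, 0 ≤ g t)
    (M : Kernel S₁ S₂) [IsSFiniteKernel M]
    (k ℓ : S₁ × S₂ → ℝ) (hk : Measurable k) (hℓ : Measurable ℓ)
    (hk0 : ∀ p, 0 ≤ k p) (hℓ0 : ∀ p, 0 ≤ ℓ p)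
    (K L : Kernel S₁ S₂) [IsMarkovKernel K] [IsMarkovKernel L]
    (hK : ∀ t, K t = (M t).withDensity (fun x => ENNReal.ofReal (k (t, x))))
    (hL : ∀ t, L t = (M t).withDensity (fun x => ENNReal.ofReal (ℓ (t, x))))
    (α : ℝ) (hα : α ∈ Set.Ioo (0 : ℝ) 1) :
    ∫⁻ p, ENNReal.ofReal
        ((α * (f p.1 * k p) + (1 - α) * (g p.1 * ℓ p)
          - (f p.1 * k p) ^ α * (g p.1 * ℓ p) ^ (1 - α)) / (1 - α)) ∂(ν.compProd M)
    = (∫⁻ t, ENNReal.ofReal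
          ((α * f t + (1 - α) * g t - (f t) ^ α * (g t) ^ (1 - α)) / (1 - α)) ∂ν)
      + ∫⁻ t, ENNReal.ofReal ((f t) ^ α * (g t) ^ (1 - α)) *
          (∫⁻ x, ENNReal.ofReal
            ((α * k (t, x) + (1 - α) * ℓ (t, x)
              - (k (t, x)) ^ α * (ℓ (t, x)) ^ (1 - α)) / (1 - α)) ∂(M t)) ∂ν := by
  have hf1 : Measurable fun p : S₁ × S₂ => f p.1 := hf.comp measurable_fst
  have hg1 : Measurable fun p : S₁ × S₂ => g p.1 := hg.comp measurable_fst
  have hmeas : Measurable fun p : S₁ × S₂ => ENNReal.ofReal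
      ((α * (f p.1 * k p) + (1 - α) * (g p.1 * ℓ p)
        - (f p.1 * k p) ^ α * (g p.1 * ℓ p) ^ (1 - α)) / (1 - α)) := by
    apply Measurable.ennreal_ofReal
    exact (((measurable_const.mul (hf1.mul hk)).add
      (measurable_const.mul (hg1.mul hℓ))).sub
      (((hf1.mul hk).pow measurable_const).mul ((hg1.mul hℓ).pow measurable_const))).div_const _
  rw [Measure.lintegral_compProd hmeas]
  have hkint : ∀ t, ∫⁻ x, ENNReal.ofReal (k (t, x)) ∂(M t) = 1 := by
    intro t
    have h1 : K t Set.univ = 1 := measure_univ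
    rwa [hK t, withDensity_apply _ MeasurableSet.univ, setLIntegral_univ] at h1
  have hℓint : ∀ t, ∫⁻ x, ENNReal.ofReal (ℓ (t, x)) ∂(M t) = 1 := by
    intro t
    have h1 : L t Set.univ = 1 := measure_univ
    rwa [hL t, withDensity_apply _ MeasurableSet.univ, setLIntegral_univ] at h1
  have hinner : ∀ t, (∫⁻ x, ENNReal.ofReal
      ((α * (f t * k (t, x)) + (1 - α) * (g t * ℓ (t, x))
        - (f t * k (t, x)) ^ α * (g t * ℓ (t, x)) ^ (1 - α)) / (1 - α)) ∂(M t))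
      = ENNReal.ofReal ((α * f t + (1 - α) * g t - (f t) ^ α * (g t) ^ (1 - α)) / (1 - α))
        + ENNReal.ofReal ((f t) ^ α * (g t) ^ (1 - α)) *
          ∫⁻ x, ENNReal.ofReal ((α * k (t, x) + (1 - α) * ℓ (t, x)
            - (k (t, x)) ^ α * (ℓ (t, x)) ^ (1 - α)) / (1 - α)) ∂(M t) := fun t =>
    tsallis_inner (M t) (fun x => k (t, x)) (fun x => ℓ (t, x))
      (hk.comp measurable_prodMk_left) (hℓ.comp measurable_prodMk_left)
      (fun x => hk0 _) (fun x => hℓ0 _) (hkint t) (hℓint t) (f t) (g t) (hf0 t) (hg0 t) α hα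
  rw [lintegral_congr hinner]
  exact lintegral_add_left (by
    apply Measurable.ennreal_ofReal
    exact (((measurable_const.mul hf).add (measurable_const.mul hg)).sub
      ((hf.pow measurable_const).mul (hg.pow measurable_const))).div_const _) _
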